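/- Let A be an n×n real symmetric positive definite matrix, let B be an m×n real matrix, and let C be an m×m real symmetric positive semidefinite matrix such that xᵀCx > 0 for every nonzero x ∈ ℝᵐ with Bᵀx = 0. Then the matrix B·A⁻¹·Bᵀ + C is symmetric positive definite. -/

import Mathlib

open Matrix

/-- If `A` is symmetric positive definite, `B` is an `m×n` matrix and `C`
is symmetric positive semidefinite and positive definite on the kernel of `Bᵀ`, then the
dual Schur complement `B·A⁻¹·Bᵀ + C` is symmetric positive definite. -/
theorem dual_schur_complement_posDef
    (n m : ℕ)
    (A : Matrix (Fin n) (Fin n) ℝ)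
    (B : Matrix (Fin m) (Fin n) ℝ)
    (C : Matrix (Fin m) (Fin m) ℝ)
    (hA : A.PosDef)
    (hC : C.PosSemidef)
    (hCker : ∀ x : Fin m → ℝ, x ≠ 0 → Bᵀ.mulVec x = 0 → 0 < x ⬝ᵥ C.mulVec x) :
    (B * A⁻¹ * Bᵀ + C).PosDef := by
  have hAinv : (A⁻¹).PosDef := hA.inv
  have hS : (B * A⁻¹ * Bᵀ).PosSemidef := by
    have := hAinv.posSemidef.mul_mul_conjTranspose_same B
    simpa using this
  rw [posDef_iff_dotProduct_mulVec]
  constructor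
  · exact hS.1.add hC.1
  · intro x hx
    have key : x ⬝ᵥ (B * A⁻¹ * Bᵀ).mulVec x = (Bᵀ.mulVec x) ⬝ᵥ A⁻¹.mulVec (Bᵀ.mulVec x) := by
      rw [← mulVec_mulVec, ← mulVec_mulVec, dotProduct_mulVec, ← mulVec_transpose]
    by_cases hk : Bᵀ.mulVec x = 0
    · have h1 : x ⬝ᵥ (B * A⁻¹ * Bᵀ).mulVec x = 0 := by
        rw [key, hk]; simp
      have h2 := hCker x hx hk
      simpa [add_mulVec, dotProduct_add, h1] using h2
    · have h1 : 0 < x ⬝ᵥ (B * A⁻¹ * Bᵀ).mulVec x := by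
        rw [key]
        have := hAinv.dotProduct_mulVec_pos hk
        simpa using this
      have h2 := hC.dotProduct_mulVec_nonneg x
      have h2' : 0 ≤ x ⬝ᵥ C.mulVec x := by simpa using h2
      have := add_pos_of_pos_of_nonneg h1 h2'
      simpa [add_mulVec, dotProduct_add] using this
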